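/- If a vehicle starts at the origin with heading 0, turns along a circle of radius r = R(x,y,θ) := (x·sin θ − y·cos θ)/(1 − cos θ) through angle θ with 0 < θ < 2π and cos θ ≠ 1, and then travels in a straight line in direction θ, then the point (x,y) lies on the straight-line portion of the path, i.e., (x,y) = (r·sin θ, r·(1−cos θ)) + d·(cos θ, sin θ) for some real d. -/
import Mathlib

open Real

/-- If a vehicle starting at the origin with heading 0 turns along a circle of radius
`r = R(x,y,θ) = (x sin θ − y cos θ)/(1 − cos θ)` through angle `θ ∈ (0, 2π)` and then
travels straight in direction `θ`, then `(x, y)` lies on the straight-line portion. -/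
theorem point_on_straight_portion (x y θ : ℝ) (h1 : 0 < θ) (h2 : θ < 2 * π)
    (hc : Real.cos θ ≠ 1) (r : ℝ)
    (hr : r = (x * Real.sin θ - y * Real.cos θ) / (1 - Real.cos θ)) :
    ∃ d : ℝ, x = r * Real.sin θ + d * Real.cos θ ∧
      y = r * (1 - Real.cos θ) + d * Real.sin θ := by
  have hne : 1 - Real.cos θ ≠ 0 := sub_ne_zero.mpr (Ne.symm hc)
  have hline : x * Real.sin θ - y * Real.cos θ = r * (1 - Real.cos θ) := by
    rw [hr]; field_simp
  have hpyth := Real.sin_sq_add_cos_sq θ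
  refine ⟨(x - r * Real.sin θ) * Real.cos θ + (y - r * (1 - Real.cos θ)) * Real.sin θ, ?_, ?_⟩
  · linear_combination Real.sin θ * hline + (-x) * hpyth
  · linear_combination (-Real.cos θ) * hline + (r - y) * hpyth
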